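/- In the lattice of bi-leveled trees, the meet of (t;T) and (s;S) is (inf{t,s}; V), where inf{t,s} is the meet in the Tamari lattice and V is the upper order ideal generated by T ∪ S in the node poset of inf{t,s}, i.e. V = T ∪ S ∪ {x | x > y for some y ∈ T ∪ S}. -/
import Mathlib



/-- Planar rooted binary trees. -/
inductive PBT : Type
  | leaf : PBT
  | node : PBT → PBT → PBT
deriving DecidableEq

namespace PBT

/-- Number of internal nodes. -/
def numNodes : PBT → ℕ
  | leaf => 0
  | node l r => numNodes l + numNodes r + 1

/-- Number of leaves. -/
def numLeaves : PBT → ℕ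
  | leaf => 1
  | node l r => numLeaves l + numLeaves r

/-- A single left-to-right (Tamari) rotation somewhere in a tree. -/
inductive Rot : PBT → PBT → Prop
  | here (a b c : PBT) : Rot (node (node a b) c) (node a (node b c))
  | left {l l' : PBT} (r : PBT) : Rot l l' → Rot (node l r) (node l' r)
  | right (l : PBT) {r r' : PBT} : Rot r r' → Rot (node l r) (node l r')

/-- The Tamari order: reflexive-transitive closure of rotations. -/
def tamariLE : PBT → PBT → Prop := Relation.ReflTransGen Rot

/-- Positions of internal nodes as paths from the root
(`false` = go left, `true` = go right). -/
def isNode : PBT → List Bool → Prop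
  | leaf, _ => False
  | node _ _, [] => True
  | node l _, (false :: p) => isNode l p
  | node _ r, (true :: p) => isNode r p

/-- 1-based left-to-right (in-order) index of a node position. -/
def idx : PBT → List Bool → ℕ
  | leaf, _ => 0
  | node l _, [] => numNodes l + 1
  | node l _, (false :: p) => idx l p
  | node l r, (true :: p) => numNodes l + 1 + idx r p

/-- `nodeLE t i j` : in the node poset of `t` (root maximal, a node is below all
of its ancestors), the node with in-order index `i` is ≤ the node with index `j`
(i.e. the position of `j` is a prefix of the position of `i`). -/
def nodeLE (t : PBT) (i j : ℕ) : Prop :=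
  ∃ p q : List Bool, isNode t p ∧ isNode t q ∧ idx t p = i ∧ idx t q = j ∧ q <+: p

end PBT

/-- Bi-leveled trees with `n` internal nodes: a planar binary tree together with
an upper order ideal `T` of its node poset (nodes indexed `1,…,n` left to right)
containing the leftmost node (index 1) as a minimal element. -/
structure BLT (n : ℕ) where
  t : PBT
  hn : t.numNodes = n
  T : Set ℕ
  hsub : T ⊆ Set.Icc 1 n
  hideal : ∀ i j, PBT.nodeLE t i j → i ∈ T → j ∈ T
  hone : (1 : ℕ) ∈ T
  hmin : ∀ i ∈ T, PBT.nodeLE t i 1 → i = 1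

/-- The partial order on bi-leveled trees: `(s;S) ≤ (t;T)` iff `s ≤ t` in the
Tamari order and `T ⊆ S`. -/
instance BLT.instPreorder (n : ℕ) : Preorder (BLT n) where
  le x y := PBT.tamariLE x.t y.t ∧ y.T ⊆ x.T
  le_refl x := ⟨Relation.ReflTransGen.refl, le_refl _⟩
  le_trans x y z h h' := ⟨h.1.trans h'.1, h'.2.trans h.2⟩

/-- Trees with `n` internal nodes, as a preorder under the Tamari order. -/
instance Yn.instPreorder (n : ℕ) : Preorder {t : PBT // t.numNodes = n} where
  le x y := PBT.tamariLE x.1 y.1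
  le_refl x := Relation.ReflTransGen.refl
  le_trans x y z h h' := Relation.ReflTransGen.trans h h'


namespace PBT

/-- Subtree at a position (leaf for invalid positions). -/
def sub : PBT → List Bool → PBT
  | t, [] => t
  | leaf, _ :: _ => leaf
  | node l _, false :: p => sub l p
  | node _ r, true :: p => sub r p

/-- Number of nodes strictly to the left of a subtree position. -/
def off : PBT → List Bool → ℕ
  | _, [] => 0
  | leaf, _ :: _ => 0
  | node l _, false :: p => off l p
  | node l r, true :: p => numNodes l + 1 + off r p

lemma idx_append (t : PBT) (q r : List Bool) :
    idx t (q ++ r) = off t q + idx (sub t q) r := by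
  induction q generalizing t with
  | nil => simp [off, sub]
  | cons b q ih =>
    cases t with
    | leaf =>
      cases b <;> simp [idx, off, sub]
    | node l r' =>
      cases b <;> simp [idx, off, sub, ih] <;> omega

lemma isNode_append (t : PBT) (q r : List Bool) :
    isNode t (q ++ r) ↔ isNode (sub t q) r := by
  induction q generalizing t with
  | nil => simp [sub]
  | cons b q ih =>
    cases t with
    | leaf => cases b <;> simp [isNode, sub]
    | node l r' => cases b <;> simp [isNode, sub, ih]

lemma isNode_sub_node {t : PBT} {q : List Bool} (h : isNode t q) :
    ∃ a b, sub t q = node a b := by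
  have h' : isNode (sub t q) [] := by
    rw [← isNode_append]; simpa using h
  cases hs : sub t q with
  | leaf => rw [hs] at h'; exact absurd h' (by simp [isNode])
  | node a b => exact ⟨a, b, rfl⟩

lemma idx_bounds {t : PBT} {p : List Bool} (h : isNode t p) :
    1 ≤ idx t p ∧ idx t p ≤ numNodes t := by
  induction t generalizing p with
  | leaf => exact absurd h (by cases p <;> simp [isNode])
  | node l r ihl ihr =>
    cases p with
    | nil => simp [idx, numNodes] <;> omega
    | cons b p =>
      cases b with
      | false =>
        have := ihl (p := p) (by simpa [isNode] using h)
        simp [idx, numNodes]; omega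
      | true =>
        have := ihr (p := p) (by simpa [isNode] using h)
        simp [idx, numNodes]; omega

lemma exists_idx {t : PBT} {k : ℕ} (h1 : 1 ≤ k) (h2 : k ≤ numNodes t) :
    ∃ p, isNode t p ∧ idx t p = k := by
  induction t generalizing k with
  | leaf => simp [numNodes] at h2; omega
  | node l r ihl ihr =>
    by_cases hl : k ≤ numNodes l
    · obtain ⟨p, hp1, hp2⟩ := ihl h1 hl
      exact ⟨false :: p, by simpa [isNode] using hp1, by simpa [idx] using hp2⟩
    · by_cases he : k = numNodes l + 1
      · exact ⟨[], by simp [isNode], by simp [idx]; omega⟩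
      · have h1' : 1 ≤ k - (numNodes l + 1) := by omega
        have h2' : k - (numNodes l + 1) ≤ numNodes r := by
          simp [numNodes] at h2; omega
        obtain ⟨p, hp1, hp2⟩ := ihr h1' h2'
        refine ⟨true :: p, by simpa [isNode] using hp1, ?_⟩
        simp [idx, hp2]; omega

lemma numNodes_rot {t t' : PBT} (h : Rot t t') : numNodes t = numNodes t' := by
  induction h with
  | here a b c => simp [numNodes]; omega
  | left r h ih => simp [numNodes, ih]
  | right l h ih => simp [numNodes, ih]

/-- Going down one rotation: for each node of the upper tree there is a node of
the lower tree with the same index, a bigger left subtree and smaller right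
subtree. -/
lemma rot_node_down {t t' : PBT} (h : Rot t t') :
    ∀ q' a' b', isNode t' q' → sub t' q' = node a' b' →
      ∃ q a b, isNode t q ∧ sub t q = node a b ∧ idx t q = idx t' q' ∧
        numNodes a' ≤ numNodes a ∧ numNodes b ≤ numNodes b' := by
  induction h with
  | here a b c =>
    intro q' a' b' hq' hs'
    match q' with
    | [] =>
      simp [sub] at hs'
      refine ⟨[false], a, b, by simp [isNode], by simp [sub], ?_, ?_, ?_⟩
      · simp [idx]
      · rw [← hs'.1]
      · rw [← hs'.2]; simp [numNodes]; omega
    | false :: p =>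
      refine ⟨false :: false :: p, a', b', ?_, ?_, ?_, le_refl _, le_refl _⟩
      · simpa [isNode] using hq'
      · simpa [sub] using hs'
      · simp [idx]
    | [true] =>
      simp [sub] at hs'
      refine ⟨[], node a b, c, by simp [isNode], by simp [sub], ?_, ?_, ?_⟩
      · simp [idx, numNodes]; omega
      · rw [← hs'.1]; simp [numNodes]; omega
      · rw [← hs'.2]
    | true :: false :: p =>
      refine ⟨false :: true :: p, a', b', ?_, ?_, ?_, le_refl _, le_refl _⟩
      · simpa [isNode] using hq'
      · simpa [sub] using hs'
      · simp [idx] <;> omega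
    | true :: true :: p =>
      refine ⟨true :: p, a', b', ?_, ?_, ?_, le_refl _, le_refl _⟩
      · simpa [isNode] using hq'
      · simpa [sub] using hs'
      · simp [idx, numNodes]; omega
  | left r h ih =>
    intro q' a' b' hq' hs'
    rename_i l l'
    match q' with
    | [] =>
      simp [sub] at hs'
      refine ⟨[], l, r, by simp [isNode], by simp [sub], ?_, ?_, ?_⟩
      · simp [idx, numNodes_rot h]
      · rw [← hs'.1, numNodes_rot h]
      · rw [← hs'.2]
    | false :: p =>
      obtain ⟨q, a, b, h1, h2, h3, h4, h5⟩ :=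
        ih p a' b' (by simpa [isNode] using hq') (by simpa [sub] using hs')
      exact ⟨false :: q, a, b, by simpa [isNode] using h1, by simpa [sub] using h2,
        by simp [idx, h3], h4, h5⟩
    | true :: p =>
      refine ⟨true :: p, a', b', by simpa [isNode] using hq',
        by simpa [sub] using hs', ?_, le_refl _, le_refl _⟩
      simp [idx, numNodes_rot h]
  | right l h ih =>
    intro q' a' b' hq' hs'
    rename_i r r'
    match q' with
    | [] =>
      simp [sub] at hs'
      refine ⟨[], l, r, by simp [isNode], by simp [sub], ?_, ?_, ?_⟩
      · simp [idx]
      · rw [← hs'.1]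
      · rw [← hs'.2, numNodes_rot h]
    | false :: p =>
      refine ⟨false :: p, a', b', by simpa [isNode] using hq',
        by simpa [sub] using hs', ?_, le_refl _, le_refl _⟩
      simp [idx]
    | true :: p =>
      obtain ⟨q, a, b, h1, h2, h3, h4, h5⟩ :=
        ih p a' b' (by simpa [isNode] using hq') (by simpa [sub] using hs')
      exact ⟨true :: q, a, b, by simpa [isNode] using h1, by simpa [sub] using h2,
        by simp [idx, h3], h4, h5⟩

/-- Going up one rotation: for each node of the lower tree there is a node of
the upper tree with the same index, a smaller left subtree and bigger right
subtree. -/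
lemma rot_node_up {t t' : PBT} (h : Rot t t') :
    ∀ q a b, isNode t q → sub t q = node a b →
      ∃ q' a' b', isNode t' q' ∧ sub t' q' = node a' b' ∧ idx t' q' = idx t q ∧
        numNodes a' ≤ numNodes a ∧ numNodes b ≤ numNodes b' := by
  induction h with
  | here a b c =>
    intro q a0 b0 hq hs
    match q with
    | [] =>
      simp [sub] at hs
      refine ⟨[true], b, c, by simp [isNode], by simp [sub], ?_, ?_, ?_⟩
      · simp [idx, numNodes] <;> omega
      · rw [← hs.1]; simp [numNodes]; omega
      · rw [← hs.2]
    | [false] =>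
      simp [sub] at hs
      refine ⟨[], a, node b c, by simp [isNode], by simp [sub], ?_, ?_, ?_⟩
      · simp [idx, numNodes]
      · rw [← hs.1]
      · rw [← hs.2]; simp [numNodes]; omega
    | false :: false :: p =>
      refine ⟨false :: p, a0, b0, by simpa [isNode] using hq,
        by simpa [sub] using hs, ?_, le_refl _, le_refl _⟩
      simp [idx]
    | false :: true :: p =>
      refine ⟨true :: false :: p, a0, b0, by simpa [isNode] using hq,
        by simpa [sub] using hs, ?_, le_refl _, le_refl _⟩
      simp [idx] <;> omega
    | true :: p =>
      refine ⟨true :: true :: p, a0, b0, by simpa [isNode] using hq,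
        by simpa [sub] using hs, ?_, le_refl _, le_refl _⟩
      simp [idx, numNodes]; omega
  | left r h ih =>
    intro q a0 b0 hq hs
    rename_i l l'
    match q with
    | [] =>
      simp [sub] at hs
      refine ⟨[], l', r, by simp [isNode], by simp [sub], ?_, ?_, ?_⟩
      · simp [idx, numNodes_rot h]
      · rw [← hs.1, numNodes_rot h]
      · rw [← hs.2]
    | false :: p =>
      obtain ⟨q', a', b', h1, h2, h3, h4, h5⟩ :=
        ih p a0 b0 (by simpa [isNode] using hq) (by simpa [sub] using hs)
      exact ⟨false :: q', a', b', by simpa [isNode] using h1, by simpa [sub] using h2,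
        by simp [idx, h3], h4, h5⟩
    | true :: p =>
      refine ⟨true :: p, a0, b0, by simpa [isNode] using hq,
        by simpa [sub] using hs, ?_, le_refl _, le_refl _⟩
      simp [idx, numNodes_rot h]
  | right l h ih =>
    intro q a0 b0 hq hs
    rename_i r r'
    match q with
    | [] =>
      simp [sub] at hs
      refine ⟨[], l, r', by simp [isNode], by simp [sub], ?_, ?_, ?_⟩
      · simp [idx]
      · rw [← hs.1]
      · rw [← hs.2, numNodes_rot h]
    | false :: p =>
      refine ⟨false :: p, a0, b0, by simpa [isNode] using hq,
        by simpa [sub] using hs, ?_, le_refl _, le_refl _⟩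
      simp [idx]
    | true :: p =>
      obtain ⟨q', a', b', h1, h2, h3, h4, h5⟩ :=
        ih p a0 b0 (by simpa [isNode] using hq) (by simpa [sub] using hs)
      exact ⟨true :: q', a', b', by simpa [isNode] using h1, by simpa [sub] using h2,
        by simp [idx, h3], h4, h5⟩

lemma tamari_node_down {t t' : PBT} (h : tamariLE t t') :
    ∀ q' a' b', isNode t' q' → sub t' q' = node a' b' →
      ∃ q a b, isNode t q ∧ sub t q = node a b ∧ idx t q = idx t' q' ∧
        numNodes a' ≤ numNodes a ∧ numNodes b ≤ numNodes b' := by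
  induction h with
  | refl =>
    intro q' a' b' h1 h2
    exact ⟨q', a', b', h1, h2, rfl, le_refl _, le_refl _⟩
  | tail h step ih =>
    intro q' a' b' h1 h2
    obtain ⟨qv, av, bv, hv1, hv2, hv3, hv4, hv5⟩ := rot_node_down step q' a' b' h1 h2
    obtain ⟨q, a, b, k1, k2, k3, k4, k5⟩ := ih qv av bv hv1 hv2
    exact ⟨q, a, b, k1, k2, by omega, by omega, by omega⟩

lemma tamari_node_up {t t' : PBT} (h : tamariLE t t') :
    ∀ q a b, isNode t q → sub t q = node a b →
      ∃ q' a' b', isNode t' q' ∧ sub t' q' = node a' b' ∧ idx t' q' = idx t q ∧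
        numNodes a' ≤ numNodes a ∧ numNodes b ≤ numNodes b' := by
  induction h with
  | refl =>
    intro q a b h1 h2
    exact ⟨q, a, b, h1, h2, rfl, le_refl _, le_refl _⟩
  | tail h step ih =>
    intro q a b h1 h2
    obtain ⟨qv, av, bv, hv1, hv2, hv3, hv4, hv5⟩ := ih q a b h1 h2
    obtain ⟨q', a', b', k1, k2, k3, k4, k5⟩ := rot_node_up step qv av bv hv1 hv2
    exact ⟨q', a', b', k1, k2, by omega, by omega, by omega⟩

/-- Soundness: the node-poset relation gives index-interval bounds. -/
lemma nodeLE_bounds {t : PBT} {i j : ℕ} (h : nodeLE t j i) :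
    ∃ q a b, isNode t q ∧ sub t q = node a b ∧ idx t q = i ∧
      i ≤ j + numNodes a ∧ j ≤ i + numNodes b := by
  obtain ⟨p, q, hp, hq, hpj, hqi, hpre⟩ := h
  obtain ⟨r, hr⟩ := hpre
  obtain ⟨a, b, hs⟩ := isNode_sub_node hq
  have hpr : isNode (sub t q) r := by rw [← isNode_append, hr]; exact hp
  rw [hs] at hpr
  have hb := idx_bounds hpr
  have hj : j = off t q + idx (node a b) r := by
    rw [← hpj, ← hr, idx_append, hs]
  have hi : i = off t q + numNodes a + 1 := by
    have : idx t q = idx t (q ++ []) := by simp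
    rw [← hqi, this, idx_append, hs]
    simp [idx]; omega
  refine ⟨q, a, b, hq, hs, hqi, ?_, ?_⟩ <;> simp [numNodes] at hb ⊢ <;> omega

/-- Completeness: index-interval bounds give the node-poset relation. -/
lemma bounds_nodeLE {t : PBT} {q : List Bool} {a b : PBT} {i j : ℕ}
    (h1 : isNode t q) (h2 : sub t q = node a b) (h3 : idx t q = i)
    (h4 : i ≤ j + numNodes a) (h5 : j ≤ i + numNodes b) :
    nodeLE t j i := by
  have hi : i = off t q + numNodes a + 1 := by
    have heq : idx t q = idx t (q ++ []) := by simp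
    rw [← h3, heq, idx_append, h2]
    simp [idx]; omega
  have hk1 : 1 ≤ j - off t q := by omega
  have hk2 : j - off t q ≤ numNodes (node a b) := by simp [numNodes]; omega
  obtain ⟨r, hr1, hr2⟩ := exists_idx hk1 hk2
  refine ⟨q ++ r, q, ?_, h1, ?_, h3, ⟨r, rfl⟩⟩
  · rw [isNode_append, h2]; exact hr1
  · rw [idx_append, h2, hr2]; omega

end PBT

/-- In the lattice of bi-leveled trees, the meet of `(t;T)` and `(s;S)` is
`(inf{t,s}; V)` where `inf{t,s}` is the meet in the Tamari lattice and `V` is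
the upper order ideal generated by `T ∪ S` in the node poset of `inf{t,s}`:
`V = T ∪ S ∪ {i | i > j for some j ∈ T ∪ S}`. -/
theorem BLT_meet (n : ℕ) (x y : BLT n) (u : {t : PBT // t.numNodes = n})
    (hu : IsGLB {(⟨x.t, x.hn⟩ : {t : PBT // t.numNodes = n}), ⟨y.t, y.hn⟩} u)
    (z : BLT n) (hzt : z.t = u.1)
    (hzT : z.T = x.T ∪ y.T ∪
      {i : ℕ | ∃ j ∈ x.T ∪ y.T, PBT.nodeLE u.1 j i ∧ i ≠ j}) :
    IsGLB {x, y} z := by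
  have hux : PBT.tamariLE u.1 x.t := hu.1 (Set.mem_insert _ _)
  have huy : PBT.tamariLE u.1 y.t := hu.1 (Set.mem_insert_of_mem _ rfl)
  constructor
  · -- z is a lower bound
    intro b hb
    have hsubz : x.T ∪ y.T ⊆ z.T := by
      rw [hzT]; exact Set.subset_union_left
    rcases hb with rfl | rfl
    · exact ⟨hzt ▸ hux, fun i hi => hsubz (Or.inl hi)⟩
    · exact ⟨hzt ▸ huy, fun i hi => hsubz (Or.inr hi)⟩
  · -- z is above every lower bound
    intro w hw
    have hwx : w ≤ x := hw (Set.mem_insert _ _)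
    have hwy : w ≤ y := hw (Set.mem_insert_of_mem _ rfl)
    have hwu : PBT.tamariLE w.t u.1 := by
      have : (⟨w.t, w.hn⟩ : {t : PBT // t.numNodes = n}) ≤ u := by
        apply hu.2
        intro b hb
        rcases hb with rfl | rfl
        · exact hwx.1
        · exact hwy.1
      exact this
    refine ⟨hzt ▸ hwu, ?_⟩
    rw [hzT]
    intro i hi
    have hA : x.T ∪ y.T ⊆ w.T := fun j hj => by
      rcases hj with hj | hj
      · exact hwx.2 hj
      · exact hwy.2 hj
    rcases hi with (hi | hi) | ⟨j, hj, hle, _⟩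
    · exact hA (Or.inl hi)
    · exact hA (Or.inr hi)
    · -- i is above some j ∈ x.T ∪ y.T in the node poset of u
      obtain ⟨q, a, b, hq, hs, hqi, h4, h5⟩ := PBT.nodeLE_bounds hle
      by_cases hji : j ≤ i
      · -- transfer the relation down to w.t
        obtain ⟨qw, aw, bw, k1, k2, k3, k4, k5⟩ :=
          PBT.tamari_node_down hwu q a b hq hs
        have : PBT.nodeLE w.t j i :=
          PBT.bounds_nodeLE k1 k2 (by omega) (by omega) (by omega)
        exact w.hideal j i this (hA hj)
      · -- transfer the relation up to x.t or y.t
        push_neg at hji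
        rcases hj with hj | hj
        · obtain ⟨qx, ax, bx, k1, k2, k3, k4, k5⟩ :=
            PBT.tamari_node_up hux q a b hq hs
          have : PBT.nodeLE x.t j i :=
            PBT.bounds_nodeLE k1 k2 (by omega) (by omega) (by omega)
          exact hwx.2 (x.hideal j i this hj)
        · obtain ⟨qy, ay, by', k1, k2, k3, k4, k5⟩ :=
            PBT.tamari_node_up huy q a b hq hs
          have : PBT.nodeLE y.t j i :=
            PBT.bounds_nodeLE k1 k2 (by omega) (by omega) (by omega)
          exact hwy.2 (y.hideal j i this hj)
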